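/- In the single-score MNL market, at a sorted cutoff vector with distinct coordinates, the partial derivative of school c's demand with respect to its own quality γ_c is ∂D_c/∂γ_c = Σ_{d=c}^{n} (1/Σ_{i=1}^{d} γ_i)(1 − γ_c/Σ_{i=1}^{d} γ_i)(p_{d+1} − p_d), which is strictly positive whenever n ≥ 2, c < n, and p is strictly increasing. -/

import Mathlib

open Finset

/-- Cutoff of the next school, extended with `p_{n+1} = 1`. -/
noncomputable def nextCutoff {n : ℕ} (p : Fin n → ℝ) (d : Fin n) : ℝ :=
  if h : (d : ℕ) + 1 < n then p ⟨(d : ℕ) + 1, h⟩ else 1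

/-- The derivative of school `c`'s demand with respect to its own quality `γ_c`
is `Σ_{d ≥ c} (1/Σ_{i ≤ d} γ_i)(1 - γ_c/Σ_{i ≤ d} γ_i)(p_{d+1} - p_d)`, which
is strictly positive when `c` is not the last school and the cutoffs are
strictly increasing. -/
theorem mnl_demand_deriv_own_quality {n : ℕ} (γ p : Fin n → ℝ)
    (hγ : ∀ i, 0 < γ i)
    (hp0 : ∀ i, 0 ≤ p i) (hpstrict : ∀ d : Fin n, p d < nextCutoff p d)
    (c : Fin n) :
    HasDerivAt
      (fun g : ℝ => ∑ d ∈ Ici c,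
        (Function.update γ c g c / ∑ i ∈ Iic d, Function.update γ c g i) *
          (nextCutoff p d - p d))
      (∑ d ∈ Ici c,
        (1 / ∑ i ∈ Iic d, γ i) * (1 - γ c / ∑ i ∈ Iic d, γ i) *
          (nextCutoff p d - p d))
      (γ c) ∧
    ((c : ℕ) + 1 < n →
      0 < ∑ d ∈ Ici c,
        (1 / ∑ i ∈ Iic d, γ i) * (1 - γ c / ∑ i ∈ Iic d, γ i) *
          (nextCutoff p d - p d)) := by
  have hS : ∀ d : Fin n, 0 < ∑ i ∈ Iic d, γ i :=
    fun d => Finset.sum_pos (fun i _ => hγ i) ⟨d, Finset.mem_Iic.2 le_rfl⟩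
  constructor
  · apply HasDerivAt.fun_sum
    intro d hd
    have hcd : c ∈ Iic d := Finset.mem_Iic.2 (Finset.mem_Ici.1 hd)
    set B := ∑ i ∈ Iic d \ {c}, γ i with hB
    have hsum : ∀ g : ℝ, ∑ i ∈ Iic d, Function.update γ c g i = g + B :=
      fun g => Finset.sum_update_of_mem hcd γ g
    have hSB : ∑ i ∈ Iic d, γ i = γ c + B := by
      rw [← hsum (γ c), Function.update_eq_self]
    have hne : γ c + B ≠ 0 := hSB ▸ (hS d).ne'
    have h1 : HasDerivAt (fun g : ℝ => g / (g + B))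
        (B / (γ c + B) ^ 2) (γ c) := by
      have h2 := (hasDerivAt_id (γ c)).div ((hasDerivAt_id (γ c)).add_const B) hne
      refine h2.congr_deriv ?_
      simp
    have heq : (fun g : ℝ =>
        (Function.update γ c g c / ∑ i ∈ Iic d, Function.update γ c g i) *
          (nextCutoff p d - p d)) =
        fun g : ℝ => g / (g + B) * (nextCutoff p d - p d) := by
      funext g
      rw [hsum g, Function.update_self]
    rw [heq]
    have h3 := h1.mul_const (nextCutoff p d - p d)
    refine h3.congr_deriv ?_
    rw [hSB]
    field_simp
    ring
  · intro hc
    apply Finset.sum_pos'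
    · intro d hd
      have h1 : 0 < ∑ i ∈ Iic d, γ i := hS d
      have h2 : γ c ≤ ∑ i ∈ Iic d, γ i :=
        Finset.single_le_sum (fun i _ => (hγ i).le)
          (Finset.mem_Iic.2 (Finset.mem_Ici.1 hd))
      have h3 : 0 < nextCutoff p d - p d := sub_pos.2 (hpstrict d)
      have h4 : γ c / ∑ i ∈ Iic d, γ i ≤ 1 := (div_le_one h1).2 h2
      have h5 : 0 ≤ 1 - γ c / ∑ i ∈ Iic d, γ i := by linarith
      positivity
    · refine ⟨⟨(c : ℕ) + 1, hc⟩, Finset.mem_Ici.2 ?_, ?_⟩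
      · exact Fin.le_def.2 (Nat.le_succ _)
      · set d : Fin n := ⟨(c : ℕ) + 1, hc⟩
        have hcd : c < d := Fin.lt_def.2 (Nat.lt_succ_self _)
        have h1 : 0 < ∑ i ∈ Iic d, γ i := hS d
        have h2 : γ c + γ d ≤ ∑ i ∈ Iic d, γ i := by
          have hsub : ({c, d} : Finset (Fin n)) ⊆ Iic d := by
            intro i hi
            rcases Finset.mem_insert.1 hi with h | h
            · exact Finset.mem_Iic.2 (h ▸ hcd.le)
            · exact Finset.mem_Iic.2 ((Finset.mem_singleton.1 h) ▸ le_rfl)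
          calc γ c + γ d = ∑ i ∈ ({c, d} : Finset (Fin n)), γ i := by
                rw [Finset.sum_pair hcd.ne]
            _ ≤ _ := Finset.sum_le_sum_of_subset_of_nonneg hsub
                (fun i _ _ => (hγ i).le)
        have h5 : γ c < ∑ i ∈ Iic d, γ i :=
          lt_of_lt_of_le (lt_add_of_pos_right _ (hγ d)) h2
        have h3 : 0 < nextCutoff p d - p d := sub_pos.2 (hpstrict d)
        have h4 : γ c / ∑ i ∈ Iic d, γ i < 1 := (div_lt_one h1).2 h5
        have h6 : 0 < 1 - γ c / ∑ i ∈ Iic d, γ i := by linarith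
        positivity
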